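/- Let A be a Krull-Schmidt additive category and B ⊆ A a full additive subcategory closed under retracts. Then the additive quotient A/B is again Krull-Schmidt: every object of A/B is a finite direct sum of objects with local endomorphism ring. -/

import Mathlib

open CategoryTheory CategoryTheory.Limits ZeroObject

namespace Stmt5

variable {A : Type*} [Category A] [Preadditive A] [HasZeroObject A]
  [HasBinaryBiproducts A] [HasFiniteBiproducts A]

/-- A morphism factors through an object belonging to the class `B`. -/
def FactorsThru (B : Set A) {x y : A} (f : x ⟶ y) : Prop :=
  ∃ (b : A) (g : x ⟶ b) (h : b ⟶ y), b ∈ B ∧ g ≫ h = f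

theorem factorsThru_add {B : Set A}
    (hB : ∀ {b b' : A}, b ∈ B → b' ∈ B → (b ⊞ b') ∈ B)
    {x y : A} {f g : x ⟶ y} (hf : FactorsThru B f) (hg : FactorsThru B g) :
    FactorsThru B (f + g) := by
  obtain ⟨b, p, q, hb, hpq⟩ := hf
  obtain ⟨b', p', q', hb', hpq'⟩ := hg
  exact ⟨b ⊞ b', biprod.lift p p', biprod.desc q q', hB hb hb', by
    rw [biprod.lift_desc, hpq, hpq']⟩

/-- A (nonempty) full additive subcategory of `A`, given by its class of objects,
closed under finite direct sums. -/
structure AdditiveSubcat (A : Type*) [Category A] [Preadditive A]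
    [HasBinaryBiproducts A] where
  carrier : Set A
  nonempty : carrier.Nonempty
  biprod_mem : ∀ {b b' : A}, b ∈ carrier → b' ∈ carrier → (b ⊞ b') ∈ carrier

variable (S : AdditiveSubcat A)

/-- The hom relation defining the additive quotient `A/B`: two morphisms are
identified when their difference factors through an object of `B`. -/
def AdditiveSubcat.rel (S : AdditiveSubcat A) : HomRel A :=
  fun _ _ f g => FactorsThru S.carrier (f - g)

instance : Congruence S.rel where
  equivalence := by
    refine ⟨fun f => ?_, fun {f g} h => ?_, fun {f g h} h1 h2 => ?_⟩
    · obtain ⟨b, hb⟩ := S.nonempty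
      exact ⟨b, 0, 0, hb, by simp⟩
    · obtain ⟨b, p, q, hb, hpq⟩ := h
      exact ⟨b, -p, q, hb, by rw [Preadditive.neg_comp, hpq, neg_sub]⟩
    · have := factorsThru_add S.biprod_mem h1 h2
      rwa [sub_add_sub_cancel] at this
  comp_left := by
    rintro X Y Z f g g' ⟨b, p, q, hb, hpq⟩
    exact ⟨b, f ≫ p, q, hb, by rw [Category.assoc, hpq, Preadditive.comp_sub]⟩
  comp_right := by
    rintro X Y Z f f' g ⟨b, p, q, hb, hpq⟩
    exact ⟨b, p, q ≫ g, hb, by rw [← Category.assoc, hpq, Preadditive.sub_comp]⟩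

/-- The additive quotient category `A/B` is preadditive. -/
instance : Preadditive (CategoryTheory.Quotient S.rel) :=
  CategoryTheory.Quotient.preadditive S.rel (by
    intro X Y f₁ f₂ g₁ g₂ h1 h2
    have := factorsThru_add S.biprod_mem h1 h2
    rwa [show (f₁ - f₂) + (g₁ - g₂) = (f₁ + g₁) - (f₂ + g₂) by abel] at this)

/-- An additive category is Krull-Schmidt if every object is a finite direct sum of
objects with local endomorphism rings. -/
def KrullSchmidt (A : Type*) [Category A] [Preadditive A] [HasFiniteBiproducts A] : Prop :=
  ∀ x : A, ∃ (n : ℕ) (f : Fin n → A),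
    (∀ i, IsLocalRing (End (f i))) ∧ Nonempty (x ≅ ⨁ f)


lemma factorsThru_neg {B : Set A} {x y : A} {f : x ⟶ y} (hf : FactorsThru B f) :
    FactorsThru B (-f) := by
  obtain ⟨b, p, q, hb, hpq⟩ := hf
  exact ⟨b, -p, q, hb, by rw [Preadditive.neg_comp, hpq]⟩

lemma factorsThru_zero {B : Set A} (hne : B.Nonempty) {x y : A} :
    FactorsThru B (0 : x ⟶ y) := by
  obtain ⟨b, hb⟩ := hne
  exact ⟨b, 0, 0, hb, by simp⟩

lemma factorsThru_sum {B : Set A} (hne : B.Nonempty)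
    (hB : ∀ {b b' : A}, b ∈ B → b' ∈ B → (b ⊞ b') ∈ B)
    {x y : A} {ι : Type*} (s : Finset ι) (g : ι → (x ⟶ y))
    (h : ∀ i ∈ s, FactorsThru B (g i)) :
    FactorsThru B (∑ i ∈ s, g i) :=
  Finset.sum_induction g _ (fun _ _ => factorsThru_add hB) (factorsThru_zero hne) h

/-- The ring homomorphism on endomorphism rings induced by the quotient functor. -/
def endRingHom (S : AdditiveSubcat A) (y : A) :
    End y →+* End ((CategoryTheory.Quotient.functor S.rel).obj y) where
  toFun g := (CategoryTheory.Quotient.functor S.rel).map g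
  map_one' := (CategoryTheory.Quotient.functor S.rel).map_id y
  map_mul' g h := (CategoryTheory.Quotient.functor S.rel).map_comp h g
  map_zero' := rfl
  map_add' _ _ := rfl

lemma endRingHom_surjective (S : AdditiveSubcat A) (y : A) :
    Function.Surjective (endRingHom S y) :=
  fun g => (CategoryTheory.Quotient.functor S.rel).map_surjective g

lemma isLocalRing_of_surjective {R S : Type*} [Ring R] [Ring S] [IsLocalRing R]
    [Nontrivial S] (f : R →+* S) (hf : Function.Surjective f) : IsLocalRing S := by
  constructor
  intro a b h
  obtain ⟨a', rfl⟩ := hf a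
  rcases IsLocalRing.isUnit_or_isUnit_of_add_one
      (show a' + (1 - a') = 1 by abel) with h' | h'
  · exact Or.inl (h'.map f)
  · refine Or.inr ?_
    have : f (1 - a') = b := by
      have := congrArg (fun t => t - f a') h
      simpa [map_sub, map_one, sub_eq_iff_eq_add'] using h.symm ▸ by
        simp [map_sub]
    exact this ▸ h'.map f

/-- If `A` is Krull-Schmidt and `B ⊆ A` is a full additive subcategory closed under
retracts, then the additive quotient `A/B` is again Krull-Schmidt: every object of
`A/B` is a finite direct sum of objects with local endomorphism rings. -/
theorem quotient_krullSchmidt (hKS : KrullSchmidt A)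
    (hretract : ∀ {b c : A}, b ∈ S.carrier →
      ∀ (s : c ⟶ b) (r : b ⟶ c), s ≫ r = 𝟙 c → c ∈ S.carrier) :
    ∀ x : A, ∃ (n : ℕ) (f : Fin n → A),
      (∀ i, IsLocalRing (End ((CategoryTheory.Quotient.functor S.rel).obj (f i)))) ∧
      Nonempty ((CategoryTheory.Quotient.functor S.rel).obj x ≅
        (CategoryTheory.Quotient.functor S.rel).obj (⨁ f)) := by
  classical
  intro x
  obtain ⟨n, f, hloc, ⟨e⟩⟩ := hKS x
  set Q := CategoryTheory.Quotient.functor S.rel with hQ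
  set p : Fin n → Prop := fun i => ¬ S.rel (𝟙 (f i)) 0 with hp
  set m := Fintype.card {i // p i} with hm
  set eqv : Fin m ≃ {i // p i} := (Fintype.equivFin _).symm with heqv
  -- objects in `B` after the bad indices
  have hmem : ∀ i : Fin n, ¬ p i → f i ∈ S.carrier := by
    intro i hi
    rw [hp] at hi
    simp only [not_not] at hi
    obtain ⟨b, g, h, hb, hgh⟩ := hi
    rw [sub_zero] at hgh
    exact hretract hb g h hgh
  refine ⟨m, fun j => f (eqv j), ?_, ?_⟩
  · intro j
    have hnt : Nontrivial (End (Q.obj (f (eqv j)))) := by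
      refine ⟨1, 0, fun h01 => (eqv j).2 ?_⟩
      have : Q.map (𝟙 (f (eqv j))) = Q.map 0 := by
        simpa [endRingHom] using h01
      rwa [CategoryTheory.Quotient.functor_map_eq_iff] at this
    have := hloc ((eqv j : Fin n))
    exact isLocalRing_of_surjective (endRingHom S (f (eqv j)))
      (endRingHom_surjective S (f (eqv j)))
  · -- the iso
    set ι : (⨁ fun j => f (eqv j)) ⟶ ⨁ f :=
      biproduct.desc fun j => biproduct.ι f (eqv j) with hι
    set π : (⨁ f) ⟶ ⨁ fun j => f (eqv j) :=
      biproduct.lift fun j => biproduct.π f (eqv j) with hπ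
    have hιπ : ι ≫ π = 𝟙 _ := by
      ext j j'
      simp only [hι, hπ, Category.assoc, biproduct.lift_π, biproduct.ι_desc_assoc,
        Category.comp_id, biproduct.ι_π, Category.id_comp]
      by_cases hjj : j' = j
      · subst hjj; simp
      · rw [dif_neg fun hc => hjj (eqv.injective (Subtype.ext hc)), dif_neg hjj]
    have hrel : S.rel (π ≫ ι) (𝟙 (⨁ f)) := by
      show FactorsThru S.carrier _
      have h1 : π ≫ ι = ∑ j : Fin m, biproduct.π f (eqv j) ≫ biproduct.ι f (eqv j) := by
        rw [hπ, hι, biproduct.lift_desc]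
      have h2 : (∑ j : Fin m, biproduct.π f (eqv j) ≫ biproduct.ι f (eqv j))
          = ∑ i ∈ Finset.univ.filter p, biproduct.π f i ≫ biproduct.ι f i :=
        (Equiv.sum_comp eqv (fun i : {i // p i} =>
          biproduct.π f (i : Fin n) ≫ biproduct.ι f (i : Fin n))).trans
        (Finset.sum_subtype (Finset.univ.filter p) (by simp)
          (fun i => biproduct.π f i ≫ biproduct.ι f i)).symm
      have h3 : (𝟙 (⨁ f) : _) = ∑ i : Fin n, biproduct.π f i ≫ biproduct.ι f i :=
        (biproduct.total).symm
      have h4 : π ≫ ι - 𝟙 (⨁ f)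
          = -∑ i ∈ Finset.univ.filter (fun i => ¬ p i),
              biproduct.π f i ≫ biproduct.ι f i := by
        rw [h1, h2, h3, ← Finset.sum_filter_add_sum_filter_not Finset.univ p]
        abel
      rw [h4]
      refine factorsThru_neg (factorsThru_sum S.nonempty S.biprod_mem _ _ ?_)
      intro i hi
      simp only [Finset.mem_filter] at hi
      exact ⟨f i, biproduct.π f i, biproduct.ι f i, hmem i hi.2, rfl⟩
    refine ⟨Q.mapIso e ≪≫ ⟨Q.map π, Q.map ι, ?_, ?_⟩⟩
    · rw [← Q.map_comp, ← Q.map_id]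
      exact CategoryTheory.Quotient.sound S.rel hrel
    · rw [← Q.map_comp, hιπ, Q.map_id]


end Stmt5
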